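/- arXiv:1212.2882 — 4 statements merged into one kernel-verified Lean document; each statement's English description precedes it below -/
import Mathlib

section
/- Let Ω, Ω̂ be p×p matrices with columns ω_{·j}, ω̂_{·j}, and set t = max_{i,j} |ω̂_{ij} − ω_{ij}|. Suppose that |ω̂_{·j}|₁ ≤ |ω_{·j}|₁ for every j, and that max_j Σ_i |ω_{ij}|^q ≤ c for some 0 ≤ q < 1. Then ‖Ω̂ − Ω‖₁ ≤ 12 c t^{1−q}, where ‖·‖₁ is the maximum absolute column sum. -/
/-- `|x|^q`, with `|x|^0` interpreted as the indicator of `x ≠ 0`. -/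
noncomputable def lqTerm (q x : ℝ) : ℝ := if x = 0 then 0 else |x| ^ q

lemma lqTerm_nonneg (q x : ℝ) : 0 ≤ lqTerm q x := by
  unfold lqTerm; split
  · exact le_refl 0
  · exact Real.rpow_nonneg (abs_nonneg x) q

lemma col_bound {n : ℕ} (q c t : ℝ) (hq0 : 0 ≤ q) (hq1 : q < 1) (hc : 0 < c)
    (htpos : 0 < t) (a b : Fin n → ℝ)
    (hcol : ∑ i, |b i| ≤ ∑ i, |a i|)
    (hlq : ∑ i, lqTerm q (a i) ≤ c)
    (ht : ∀ i, |b i - a i| ≤ t) :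
    ∑ i, |b i - a i| ≤ 4 * c * t ^ (1 - q) := by
  classical
  set S : Finset (Fin n) := Finset.univ.filter (fun i => t < |a i|) with hS
  have htq : (0:ℝ) < t ^ q := Real.rpow_pos_of_pos htpos q
  have ht1q : (0:ℝ) ≤ t ^ (1 - q) := Real.rpow_nonneg htpos.le _
  -- cardinality bound
  have hcard : (S.card : ℝ) * t ^ q ≤ c := by
    have h1 : ∀ i ∈ S, t ^ q ≤ lqTerm q (a i) := by
      intro i hi
      have hti : t < |a i| := by simpa [hS] using (Finset.mem_filter.mp hi).2
      have hane : a i ≠ 0 := by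
        intro h; rw [h] at hti; simp at hti; linarith
      simp only [lqTerm, if_neg hane]
      exact Real.rpow_le_rpow htpos.le hti.le hq0
    calc (S.card : ℝ) * t ^ q = ∑ _i ∈ S, t ^ q := by
          rw [Finset.sum_const, nsmul_eq_mul]
      _ ≤ ∑ i ∈ S, lqTerm q (a i) := Finset.sum_le_sum h1
      _ ≤ ∑ i, lqTerm q (a i) := Finset.sum_le_sum_of_subset_of_nonneg
            (Finset.subset_univ S) (fun i _ _ => lqTerm_nonneg q (a i))
      _ ≤ c := hlq
  -- small entries bound
  have hsmall : ∑ i ∈ Sᶜ, |a i| ≤ c * t ^ (1 - q) := by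
    have h1 : ∀ i ∈ Sᶜ, |a i| ≤ lqTerm q (a i) * t ^ (1 - q) := by
      intro i hi
      have hti : |a i| ≤ t := by
        have := Finset.mem_compl.mp hi
        simp only [hS, Finset.mem_filter, Finset.mem_univ, true_and] at this
        linarith [not_lt.mp this]
      by_cases hz : a i = 0
      · simp [lqTerm, hz]
      · have hpos : 0 < |a i| := abs_pos.mpr hz
        simp only [lqTerm, if_neg hz]
        calc |a i| = |a i| ^ q * |a i| ^ (1 - q) := by
              rw [← Real.rpow_add hpos]; ring_nf; exact (Real.rpow_one _).symm
          _ ≤ |a i| ^ q * t ^ (1 - q) := by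
              apply mul_le_mul_of_nonneg_left
                (Real.rpow_le_rpow hpos.le hti (by linarith))
                (Real.rpow_nonneg hpos.le q)
    calc ∑ i ∈ Sᶜ, |a i| ≤ ∑ i ∈ Sᶜ, lqTerm q (a i) * t ^ (1 - q) :=
          Finset.sum_le_sum h1
      _ = (∑ i ∈ Sᶜ, lqTerm q (a i)) * t ^ (1 - q) := by rw [Finset.sum_mul]
      _ ≤ (∑ i, lqTerm q (a i)) * t ^ (1 - q) := by
          apply mul_le_mul_of_nonneg_right _ ht1q
          exact Finset.sum_le_sum_of_subset_of_nonneg (Finset.subset_univ _)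
            (fun i _ _ => lqTerm_nonneg q (a i))
      _ ≤ c * t ^ (1 - q) := mul_le_mul_of_nonneg_right hlq ht1q
  -- big entries bound
  have hbig : ∑ i ∈ S, |b i - a i| ≤ c * t ^ (1 - q) := by
    calc ∑ i ∈ S, |b i - a i| ≤ ∑ _i ∈ S, t := Finset.sum_le_sum (fun i _ => ht i)
      _ = (S.card : ℝ) * t := by rw [Finset.sum_const, nsmul_eq_mul]
      _ = (S.card : ℝ) * t ^ q * t ^ (1 - q) := by
          rw [mul_assoc, ← Real.rpow_add htpos]; ring_nf
          rw [Real.rpow_one]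
      _ ≤ c * t ^ (1 - q) := mul_le_mul_of_nonneg_right hcard ht1q
  -- combine
  have hsplit : ∀ f : Fin n → ℝ, ∑ i, f i = ∑ i ∈ S, f i + ∑ i ∈ Sᶜ, f i := by
    intro f; rw [Finset.sum_add_sum_compl]
  have hbSc : ∑ i ∈ Sᶜ, |b i| ≤ ∑ i ∈ Sᶜ, |a i| + ∑ i ∈ S, |b i - a i| := by
    have h1 : ∑ i ∈ S, |a i| - ∑ i ∈ S, |b i| ≤ ∑ i ∈ S, |b i - a i| := by
      rw [← Finset.sum_sub_distrib]
      apply Finset.sum_le_sum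
      intro i _
      have := abs_sub_abs_le_abs_sub (a i) (b i)
      rw [abs_sub_comm] at this
      linarith
    have h2 := hcol
    rw [hsplit (fun i => |b i|), hsplit (fun i => |a i|)] at h2
    linarith
  have hdSc : ∑ i ∈ Sᶜ, |b i - a i| ≤ ∑ i ∈ Sᶜ, |b i| + ∑ i ∈ Sᶜ, |a i| := by
    rw [← Finset.sum_add_distrib]
    exact Finset.sum_le_sum (fun i _ => abs_sub (b i) (a i))
  calc ∑ i, |b i - a i| = ∑ i ∈ S, |b i - a i| + ∑ i ∈ Sᶜ, |b i - a i| :=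
        hsplit _
    _ ≤ 2 * (∑ i ∈ S, |b i - a i|) + 2 * (∑ i ∈ Sᶜ, |a i|) := by linarith
    _ ≤ 2 * (c * t ^ (1 - q)) + 2 * (c * t ^ (1 - q)) := by linarith
    _ = 4 * c * t ^ (1 - q) := by ring

/-- Lemma le5: if every column of `Ω̂` has `ℓ₁` norm no larger than
the corresponding column of `Ω`, each column of `Ω` lies in the `ℓ_q` ball of
radius `c`, and `t` bounds the entrywise difference, then
`‖Ω̂ − Ω‖₁ ≤ 12 c t^{1−q}` (maximum absolute column sum norm). -/
theorem stmt7 {p : ℕ} (q c t : ℝ) (hq0 : 0 ≤ q) (hq1 : q < 1) (hc : 0 < c)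
    (ht0 : 0 ≤ t)
    (Ω Ωhat : Matrix (Fin p) (Fin p) ℝ)
    (hcol : ∀ j, ∑ i, |Ωhat i j| ≤ ∑ i, |Ω i j|)
    (hlq : ∀ j, ∑ i, lqTerm q (Ω i j) ≤ c)
    (ht : ∀ i j, |Ωhat i j - Ω i j| ≤ t) :
    (⨆ j : Fin p, ∑ i, |Ωhat i j - Ω i j|) ≤ 12 * c * t ^ (1 - q) := by
  have ht1q : (0:ℝ) ≤ t ^ (1 - q) := Real.rpow_nonneg ht0 _
  have hRHS : (0:ℝ) ≤ 12 * c * t ^ (1 - q) := by positivity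
  apply Real.iSup_le _ hRHS
  intro j
  rcases eq_or_lt_of_le ht0 with h0 | htpos
  · have : ∀ i, |Ωhat i j - Ω i j| = 0 := fun i =>
      le_antisymm (by rw [← h0] at ht; exact ht i j) (abs_nonneg _)
    simp [this]
    exact hRHS
  · calc ∑ i, |Ωhat i j - Ω i j| ≤ 4 * c * t ^ (1 - q) :=
        col_bound q c t hq0 hq1 hc htpos (fun i => Ω i j) (fun i => Ωhat i j)
          (hcol j) (hlq j) (fun i => ht i j)
      _ ≤ 12 * c * t ^ (1 - q) := by nlinarith
end

section
/- (Key step of Lemma le5) Let h = ω̂ − ω ∈ ℝ^p, t ≥ 0 with max_i |h_i| ≤ t, and suppose |ω̂|₁ ≤ |ω|₁. Decompose h = h¹ + h², where h¹_i = ω̂_i 1{|ω̂_i| ≥ 2t} − ω_i and h²_i = ω̂_i 1{|ω̂_i| < 2t}. Then |h²|₁ ≤ |h¹|₁, and consequently |h|₁ ≤ 2|h¹|₁. -/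
/-- key step of Lemma le5: with `h = ω̂ − ω`, entrywise bound `t`,
`|ω̂|₁ ≤ |ω|₁`, and the thresholded decomposition `h = h¹ + h²`, one has
`|h²|₁ ≤ |h¹|₁` and `|h|₁ ≤ 2 |h¹|₁`. -/
theorem stmt8 {p : ℕ} (t : ℝ) (ht : 0 ≤ t) (ω ωhat : Fin p → ℝ)
    (hbd : ∀ i, |ωhat i - ω i| ≤ t)
    (hl1 : ∑ i, |ωhat i| ≤ ∑ i, |ω i|)
    (h h1 h2 : Fin p → ℝ)
    (hh : h = fun i => ωhat i - ω i)
    (hh1 : h1 = fun i => (if 2 * t ≤ |ωhat i| then ωhat i else 0) - ω i)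
    (hh2 : h2 = fun i => if |ωhat i| < 2 * t then ωhat i else 0) :
    (∑ i, |h2 i|) ≤ (∑ i, |h1 i|) ∧ (∑ i, |h i|) ≤ 2 * ∑ i, |h1 i| := by
  have e : ∀ i, |ωhat i| = |ω i + h1 i| + |h2 i| := by
    intro i
    by_cases hc : 2 * t ≤ |ωhat i|
    · simp [hh1, hh2, hc, not_lt.mpr hc]
    · simp [hh1, hh2, hc, lt_of_not_ge hc]
  have key : (∑ i, |h2 i|) ≤ ∑ i, |h1 i| := by
    have h1' : (∑ i, |ω i + h1 i|) + ∑ i, |h2 i| ≤ ∑ i, |ω i| := by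
      rw [← Finset.sum_add_distrib]
      simpa only [← e] using hl1
    have h2' : (∑ i, |ω i|) ≤ (∑ i, |ω i + h1 i|) + ∑ i, |h1 i| := by
      rw [← Finset.sum_add_distrib]
      apply Finset.sum_le_sum
      intro i _
      calc |ω i| = |(ω i + h1 i) - h1 i| := by ring_nf
        _ ≤ |ω i + h1 i| + |h1 i| := abs_sub _ _
    linarith
  refine ⟨key, ?_⟩
  have hsum : (∑ i, |h i|) ≤ (∑ i, |h1 i|) + ∑ i, |h2 i| := by
    rw [← Finset.sum_add_distrib]
    apply Finset.sum_le_sum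
    intro i _
    have : h i = h1 i + h2 i := by
      by_cases hc : 2 * t ≤ |ωhat i|
      · simp [hh, hh1, hh2, hc, not_lt.mpr hc]
      · simp [hh, hh1, hh2, hc, lt_of_not_ge hc]; ring
    rw [this]; exact abs_add_le _ _
  linarith
end

section
/- (Lemma dffbd, per-comparison loss) Let Ω(θ) = (M/2)[I_p + ε Σ_{m=1}^r γ_m λ_m(b_m)] and Ω(θ') defined analogously with γ'_m, where r = ⌈p/2⌉, each λ_m(b) is the p×p matrix whose m-th row equals b ∈ {0,1}^p (supported on the last r coordinates, with exactly k ones) and is zero elsewhere. Then ‖Ω(θ) − Ω(θ')‖₂² ≥ H(γ, γ') · (Mkε/2)² / p, where H(γ,γ') = Σ_m |γ_m − γ'_m| is the Hamming distance. -/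
open Matrix

/-- The spectral norm of a matrix: the operator norm induced by the Euclidean norm. -/
noncomputable def matSpectralNorm {p : ℕ} (A : Matrix (Fin p) (Fin p) ℝ) : ℝ :=
  ‖(LinearMap.toContinuousLinearMap
      (Matrix.toEuclideanLin A))‖

/-- Lemma dffbd: for the precision matrices
`Ω(θ) = (M/2)[I + ε Σ_m γ_m λ_m(b_m)]` built from `γ, γ' ∈ {0,1}^r` (sharing the
same rows `b_m`, each a 0/1 vector supported on the last `r` coordinates with
exactly `k` ones), the spectral norm satisfies
`‖Ω(θ) − Ω(θ')‖₂² ≥ H(γ,γ')·(Mkε/2)²/p`. -/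
theorem stmt12 {p k : ℕ} (hp : 2 ≤ p) (hk : 1 ≤ k) (M ε : ℝ)
    (hM : 0 < M) (hε : 0 < ε)
    (r : ℕ) (hr : r = (p + 1) / 2)
    (b : Fin r → Fin p → ℝ)
    (hb01 : ∀ m j, b m j = 0 ∨ b m j = 1)
    (hbsupp : ∀ m, ∀ j : Fin p, (j : ℕ) < p - r → b m j = 0)
    (hbk : ∀ m, (Finset.univ.filter fun j => b m j ≠ 0).card = k)
    (γ γ' : Fin r → ℝ)
    (hγ : ∀ m, γ m = 0 ∨ γ m = 1) (hγ' : ∀ m, γ' m = 0 ∨ γ' m = 1)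
    (Ω Ω' : Matrix (Fin p) (Fin p) ℝ)
    (hΩ : Ω = (M / 2) • ((1 : Matrix (Fin p) (Fin p) ℝ) +
      ε • ∑ m : Fin r, γ m • Matrix.of fun (i j : Fin p) =>
        if (i : ℕ) = (m : ℕ) then b m j else 0))
    (hΩ' : Ω' = (M / 2) • ((1 : Matrix (Fin p) (Fin p) ℝ) +
      ε • ∑ m : Fin r, γ' m • Matrix.of fun (i j : Fin p) =>
        if (i : ℕ) = (m : ℕ) then b m j else 0)) :
    (∑ m : Fin r, |γ m - γ' m|) * (M * k * ε / 2) ^ 2 / p ≤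
      matSpectralNorm (Ω - Ω') ^ 2 := by

  have hrp : r ≤ p := by omega
  have hr1 : 1 ≤ r := by omega
  have hp0 : (0:ℝ) < p := by exact_mod_cast (by omega : 0 < p)
  set D : Matrix (Fin p) (Fin p) ℝ := Ω - Ω' with hD
  -- the test vector: indicator of the last r coordinates
  set v : EuclideanSpace ℝ (Fin p) :=
    WithLp.toLp 2 (fun i => if p - r ≤ (i:ℕ) then (1:ℝ) else 0) with hv
  -- entrywise formula for D
  have hDentry : ∀ i j, D i j =
      ∑ m : Fin r, (if (i:ℕ) = (m:ℕ) then (M/2*ε) * (γ m - γ' m) * b m j else 0) := by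
    intro i j
    simp only [hD, hΩ, hΩ', Matrix.sub_apply, Matrix.smul_apply, Matrix.add_apply,
      Matrix.sum_apply, Matrix.of_apply, smul_eq_mul]
    rw [show (∑ m : Fin r, if (i:ℕ) = (m:ℕ) then (M/2*ε) * (γ m - γ' m) * b m j else 0)
        = ∑ m : Fin r, (M/2*ε) * ((γ m * (if (i:ℕ) = (m:ℕ) then b m j else 0))
            - (γ' m * (if (i:ℕ) = (m:ℕ) then b m j else 0))) from
      Finset.sum_congr rfl fun m _ => by
        by_cases h : (i:ℕ) = (m:ℕ) <;> simp [h] <;> ring]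
    rw [← Finset.mul_sum, Finset.sum_sub_distrib]
    ring
  have hvj : ∀ j : Fin p, v j = if p - r ≤ (j:ℕ) then (1:ℝ) else 0 := fun _ => rfl
  -- row sums against v equal k
  have hbsum : ∀ m : Fin r, ∑ j : Fin p, b m j * v j = (k : ℝ) := by
    intro m
    have h1 : ∀ j, b m j * v j = b m j := by
      intro j
      rcases le_or_gt (p - r) (j:ℕ) with h | h
      · rw [hvj j, if_pos h, mul_one]
      · rw [hbsupp m j h, zero_mul]
    simp_rw [h1]
    rw [← Finset.sum_filter_ne_zero]
    have hone : ∀ j ∈ Finset.univ.filter (fun j => b m j ≠ 0), b m j = 1 := by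
      intro j hj
      rcases hb01 m j with h | h
      · exact absurd h (Finset.mem_filter.mp hj).2
      · exact h
    rw [Finset.sum_congr rfl hone, Finset.sum_const, hbk m, nsmul_eq_mul, mul_one]
  -- formula for D.mulVec v
  have hDv : ∀ i : Fin p, D.mulVec v i =
      ∑ m : Fin r, (if (i:ℕ) = (m:ℕ) then (M/2*ε) * (γ m - γ' m) * (k:ℝ) else 0) := by
    intro i
    simp only [Matrix.mulVec, dotProduct]
    calc ∑ j : Fin p, D i j * v j
        = ∑ j : Fin p, ∑ m : Fin r,
            (if (i:ℕ) = (m:ℕ) then (M/2*ε) * (γ m - γ' m) * b m j else 0) * v j := by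
          apply Finset.sum_congr rfl; intro j _; rw [hDentry, Finset.sum_mul]
      _ = ∑ m : Fin r, ∑ j : Fin p,
            (if (i:ℕ) = (m:ℕ) then (M/2*ε) * (γ m - γ' m) * b m j else 0) * v j :=
          Finset.sum_comm
      _ = ∑ m : Fin r, (if (i:ℕ) = (m:ℕ) then (M/2*ε) * (γ m - γ' m) * (k:ℝ) else 0) := by
          apply Finset.sum_congr rfl
          intro m _
          by_cases h : (i:ℕ) = (m:ℕ)
          · simp only [h, if_true]
            simp_rw [mul_assoc, ← Finset.mul_sum, hbsum m]
          · simp [h]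
  -- value at lifted indices
  have hDvc : ∀ m : Fin r, D.mulVec v (Fin.castLE hrp m) = (M/2*ε) * (γ m - γ' m) * (k:ℝ) := by
    intro m
    rw [hDv]
    rw [Finset.sum_eq_single m]
    · simp
    · intro m' _ hne
      simp only [Fin.coe_castLE]
      rw [if_neg (fun h => hne (Fin.ext h.symm))]
    · simp
  set w : EuclideanSpace ℝ (Fin p) := WithLp.toLp 2 (D.mulVec v) with hw
  have hnormsq : ∀ x : EuclideanSpace ℝ (Fin p), ‖x‖^2 = ∑ i, (x i)^2 := by
    intro x
    rw [EuclideanSpace.norm_eq, Real.sq_sqrt (by positivity)]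
    simp [Real.norm_eq_abs, sq_abs]
  -- lower bound on ‖w‖²
  have hlow : (∑ m : Fin r, |γ m - γ' m|) * (M * k * ε / 2)^2 ≤ ‖w‖^2 := by
    rw [hnormsq]
    have hsum : (∑ m : Fin r, |γ m - γ' m|) * (M * k * ε / 2)^2
        = ∑ m : Fin r, (w (Fin.castLE hrp m))^2 := by
      rw [Finset.sum_mul]
      apply Finset.sum_congr rfl
      intro m _
      rw [show w (Fin.castLE hrp m) = (D.mulVec v) (Fin.castLE hrp m) from rfl, hDvc m]
      rcases hγ m with h1 | h1 <;> rcases hγ' m with h2 | h2 <;>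
        rw [h1, h2] <;> norm_num <;> ring_nf
    rw [hsum]
    have : ∑ m : Fin r, (w (Fin.castLE hrp m))^2
        = ∑ i ∈ Finset.univ.image (Fin.castLE hrp), (w i)^2 := by
      rw [Finset.sum_image]
      intro a _ c _ h
      exact Fin.ext (by simpa [Fin.ext_iff] using h)
    rw [this]
    exact Finset.sum_le_sum_of_subset_of_nonneg (Finset.subset_univ _)
      (fun i _ _ => sq_nonneg _)
  -- upper bound ‖v‖² ≤ p
  have hvle : ‖v‖^2 ≤ (p:ℝ) := by
    rw [hnormsq]
    calc ∑ i : Fin p, (v i)^2 ≤ ∑ _i : Fin p, (1:ℝ) := by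
          apply Finset.sum_le_sum
          intro i _
          rcases le_or_gt (p - r) (i:ℕ) with h | h
          · rw [hvj i, if_pos h]; norm_num
          · rw [hvj i, if_neg (not_le.mpr h)]; norm_num
      _ = (p:ℝ) := by simp
  -- operator norm bound
  set T := (LinearMap.toContinuousLinearMap
      (Matrix.toEuclideanLin D)) with hT
  have hTv : T v = w := rfl
  have hTnn : 0 ≤ ‖T‖ := norm_nonneg _
  have hub : ‖w‖^2 ≤ ‖T‖^2 * (p:ℝ) := by
    have h1 : ‖w‖ ≤ ‖T‖ * ‖v‖ := by rw [← hTv]; exact T.le_opNorm v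
    calc ‖w‖^2 ≤ (‖T‖ * ‖v‖)^2 := by
          apply pow_le_pow_left₀ (norm_nonneg _) h1
      _ = ‖T‖^2 * ‖v‖^2 := by ring
      _ ≤ ‖T‖^2 * (p:ℝ) := by
          apply mul_le_mul_of_nonneg_left hvle (sq_nonneg _)
  have hfinal : (∑ m : Fin r, |γ m - γ' m|) * (M * k * ε / 2)^2 ≤ ‖T‖^2 * (p:ℝ) :=
    le_trans hlow hub
  have : matSpectralNorm (Ω - Ω') = ‖T‖ := rfl
  rw [this, div_le_iff₀ hp0]
  exact hfinal
end

section
/- (Le Cam–Assouad hybrid bound, Lemma AL, special case) Let Θ = Γ × Λ with Γ = {0,1}^r, and for each θ ∈ Θ let P_θ be a probability measure and ψ(θ) an element of a metric space (M, d). For a ∈ {0,1} and 1 ≤ i ≤ r, let P̄_{a,i} be the uniform mixture of {P_θ : γ_i(θ) = a}. Then for any estimator T and any s > 0, max_{θ∈Θ} 2^s E_θ d^s(T, ψ(θ)) ≥ α (r/2) min_{1≤i≤r} ‖P̄_{0,i} ∧ P̄_{1,i}‖, where α = min{ d^s(ψ(θ), ψ(θ')) / H(γ(θ), γ(θ'))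 : H(γ(θ), γ(θ')) ≥ 1 } and ‖P ∧ Q‖ = ∫ min(dP, dQ) is the total variation affinity. -/
open MeasureTheory

/-- Le Cam–Assouad hybrid bound, Lemma AL, special case:
`Θ = {0,1}^r × Λ`, each `P_θ` has density `f θ` w.r.t. `ν`, `ψ : Θ → M` with
`(M,d)` a metric space. With `H` the Hamming distance on the first component,
`P̄_{a,i}` the uniform mixture over `{θ : γ_i(θ) = a}`, and `α` a per-comparison
bound satisfying `α · H(γ(θ), γ(θ')) ≤ d(ψθ, ψθ')^s` whenever `H ≥ 1`, every
estimator `T` satisfies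
`max_θ 2^s E_θ d(T, ψθ)^s ≥ α (r/2) min_i ‖P̄_{0,i} ∧ P̄_{1,i}‖`. -/
theorem stmt18 {Z M : Type*} [MeasurableSpace Z] [MetricSpace M]
    {r : ℕ} {Λ : Type*} [Fintype Λ] [Nonempty Λ]
    (ν : Measure Z)
    (f : (Fin r → Bool) × Λ → Z → ℝ)
    (hf0 : ∀ θ z, 0 ≤ f θ z)
    (hfmeas : ∀ θ, Measurable (f θ))
    (hfint : ∀ θ, ∫ z, f θ z ∂ν = 1)
    (ψ : (Fin r → Bool) × Λ → M) (T : Z → M)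
    (s : ℝ) (hs : 0 < s) (α : ℝ) (hα0 : 0 ≤ α)
    (hα : ∀ θ θ' : (Fin r → Bool) × Λ,
      (1 : ℝ) ≤ ∑ i : Fin r, (if θ.1 i = θ'.1 i then (0 : ℝ) else 1) →
      α * ∑ i : Fin r, (if θ.1 i = θ'.1 i then (0 : ℝ) else 1) ≤
        dist (ψ θ) (ψ θ') ^ s)
    (hTint : ∀ θ, Integrable (fun z => dist (T z) (ψ θ) ^ s * f θ z) ν) :
    α * (r / 2) *
      (⨅ i : Fin r, ∫ z,
        min ((1 / (2 ^ (r - 1) * (Fintype.card Λ : ℝ))) *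
              ∑ θ ∈ Finset.univ.filter (fun θ : (Fin r → Bool) × Λ => θ.1 i = false),
                f θ z)
            ((1 / (2 ^ (r - 1) * (Fintype.card Λ : ℝ))) *
              ∑ θ ∈ Finset.univ.filter (fun θ : (Fin r → Bool) × Λ => θ.1 i = true),
                f θ z) ∂ν) ≤
    ⨆ θ : (Fin r → Bool) × Λ,
      2 ^ s * ∫ z, dist (T z) (ψ θ) ^ s * f θ z ∂ν := by
  classical
  set c : ℝ := 1 / (2 ^ (r - 1) * (Fintype.card Λ : ℝ)) with hc
  have hΛ : (0:ℝ) < Fintype.card Λ := by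
    exact_mod_cast Fintype.card_pos
  have hcpos : 0 < c := by
    rw [hc]; positivity
  have h2s : (0:ℝ) < 2 ^ s := Real.rpow_pos_of_pos two_pos s
  have hR0 : ∀ θ : (Fin r → Bool) × Λ, 0 ≤ ∫ z, dist (T z) (ψ θ) ^ s * f θ z ∂ν := fun θ =>
    integral_nonneg fun z => mul_nonneg (Real.rpow_nonneg dist_nonneg s) (hf0 θ z)
  have hbdd : BddAbove (Set.range fun θ : (Fin r → Bool) × Λ =>
      2 ^ s * ∫ z, dist (T z) (ψ θ) ^ s * f θ z ∂ν) := Set.Finite.bddAbove (Set.finite_range _)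
  have hsup0 : 0 ≤ ⨆ θ : (Fin r → Bool) × Λ, 2 ^ s * ∫ z, dist (T z) (ψ θ) ^ s * f θ z ∂ν := by
    have θ0 : (Fin r → Bool) × Λ := Classical.arbitrary _
    exact le_trans (mul_nonneg h2s.le (hR0 θ0)) (le_ciSup hbdd θ0)
  rcases Nat.eq_zero_or_pos r with hr | hr
  · subst hr
    simpa using hsup0
  -- integrability of the densities
  have hfi : ∀ θ : (Fin r → Bool) × Λ, Integrable (f θ) ν := by
    intro θ
    by_contra h
    have h1 := hfint θ
    rw [integral_undef h] at h1
    norm_num at h1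
  -- notation for partial sums
  set S : Fin r → Bool → Z → ℝ := fun i a z =>
    ∑ θ ∈ Finset.univ.filter (fun θ : (Fin r → Bool) × Λ => θ.1 i = a), f θ z with hSdef
  have hSint : ∀ i a, Integrable (S i a) ν := fun i a =>
    integrable_finset_sum _ fun θ _ => hfi θ
  have hminint : ∀ i, Integrable (fun z => min (S i false z) (S i true z)) ν := by
    intro i
    have h := (hSint i false).inf (hSint i true)
    simpa [Pi.inf_def] using h
  -- the pointwise key inequality
  have key : ∀ z, α * ∑ i : Fin r, min (S i false z) (S i true z) ≤
      ∑ θ : (Fin r → Bool) × Λ, 2 ^ s * (dist (T z) (ψ θ) ^ s * f θ z) := by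
    intro z
    obtain ⟨θh, -, hθh⟩ := Finset.exists_min_image Finset.univ
      (fun θ : (Fin r → Bool) × Λ => dist (T z) (ψ θ)) Finset.univ_nonempty
    -- per-θ bound
    have hper : ∀ θ : (Fin r → Bool) × Λ,
        α * (∑ i : Fin r, if θh.1 i = θ.1 i then (0:ℝ) else 1) ≤
        2 ^ s * dist (T z) (ψ θ) ^ s := by
      intro θ
      by_cases h1 : (1:ℝ) ≤ ∑ i : Fin r, if θh.1 i = θ.1 i then (0:ℝ) else 1
      · have hd : dist (ψ θh) (ψ θ) ≤ 2 * dist (T z) (ψ θ) := by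
          have ht := dist_triangle_left (ψ θh) (ψ θ) (T z)
          have hm := hθh θ (Finset.mem_univ θ)
          linarith
        calc α * ∑ i : Fin r, (if θh.1 i = θ.1 i then (0:ℝ) else 1)
            ≤ dist (ψ θh) (ψ θ) ^ s := hα θh θ h1
          _ ≤ (2 * dist (T z) (ψ θ)) ^ s :=
              Real.rpow_le_rpow dist_nonneg hd hs.le
          _ = 2 ^ s * dist (T z) (ψ θ) ^ s :=
              Real.mul_rpow (by norm_num) dist_nonneg
      · have h0 : (∑ i : Fin r, if θh.1 i = θ.1 i then (0:ℝ) else 1) = 0 := by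
          by_cases hall : ∀ i, θh.1 i = θ.1 i
          · simp [hall]
          · exfalso
            push_neg at hall
            obtain ⟨i, hi⟩ := hall
            refine h1 ?_
            have h2 : (1:ℝ) = if θh.1 i = θ.1 i then (0:ℝ) else 1 := by simp [hi]
            exact h2.trans_le <| Finset.single_le_sum (f := fun i : Fin r =>
              if θh.1 i = θ.1 i then (0:ℝ) else 1)
              (fun j _ => by by_cases h : θh.1 j = θ.1 j <;> simp [h]) (Finset.mem_univ i)
        rw [h0, mul_zero]
        exact mul_nonneg h2s.le (Real.rpow_nonneg dist_nonneg s)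
    have hSalt : ∀ i : Fin r, S i (!(θh.1 i)) z =
        ∑ θ : (Fin r → Bool) × Λ, (if θh.1 i = θ.1 i then (0:ℝ) else 1) * f θ z := by
      intro i
      rw [hSdef]
      simp only
      rw [Finset.sum_filter]
      refine Finset.sum_congr rfl fun θ _ => ?_
      cases h : θh.1 i <;> cases h' : θ.1 i <;> simp [h, h']
    calc α * ∑ i : Fin r, min (S i false z) (S i true z)
        ≤ α * ∑ i : Fin r, S i (!(θh.1 i)) z := by
          refine mul_le_mul_of_nonneg_left (Finset.sum_le_sum fun i _ => ?_) hα0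
          cases h : θh.1 i
          · simpa [h] using min_le_right (S i false z) (S i true z)
          · simpa [h] using min_le_left (S i false z) (S i true z)
      _ = α * ∑ θ : (Fin r → Bool) × Λ,
            (∑ i : Fin r, if θh.1 i = θ.1 i then (0:ℝ) else 1) * f θ z := by
          congr 1
          simp_rw [hSalt]
          rw [Finset.sum_comm]
          exact Finset.sum_congr rfl fun θ _ => (Finset.sum_mul _ _ _).symm
      _ = ∑ θ : (Fin r → Bool) × Λ,
            α * (∑ i : Fin r, if θh.1 i = θ.1 i then (0:ℝ) else 1) * f θ z := by
          rw [Finset.mul_sum]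
          exact Finset.sum_congr rfl fun θ _ => (mul_assoc _ _ _).symm
      _ ≤ ∑ θ : (Fin r → Bool) × Λ, 2 ^ s * dist (T z) (ψ θ) ^ s * f θ z :=
          Finset.sum_le_sum fun θ _ => mul_le_mul_of_nonneg_right (hper θ) (hf0 θ z)
      _ = ∑ θ : (Fin r → Bool) × Λ, 2 ^ s * (dist (T z) (ψ θ) ^ s * f θ z) := by
          exact Finset.sum_congr rfl fun θ _ => mul_assoc _ _ _
  -- integrate the key inequality
  have hL : Integrable (fun z => α * ∑ i : Fin r, min (S i false z) (S i true z)) ν :=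
    (integrable_finset_sum _ fun i _ => hminint i).const_mul α
  have hU : Integrable (fun z => ∑ θ : (Fin r → Bool) × Λ,
      2 ^ s * (dist (T z) (ψ θ) ^ s * f θ z)) ν :=
    integrable_finset_sum _ fun θ _ => (hTint θ).const_mul _
  have hint : (∫ z, α * ∑ i : Fin r, min (S i false z) (S i true z) ∂ν) ≤
      ∫ z, ∑ θ : (Fin r → Bool) × Λ, 2 ^ s * (dist (T z) (ψ θ) ^ s * f θ z) ∂ν :=
    integral_mono hL hU key
  set A : Fin r → ℝ := fun i => ∫ z, min (S i false z) (S i true z) ∂ν with hA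
  set R : (Fin r → Bool) × Λ → ℝ := fun θ => ∫ z, dist (T z) (ψ θ) ^ s * f θ z ∂ν with hR
  have hintL : (∫ z, α * ∑ i : Fin r, min (S i false z) (S i true z) ∂ν) =
      α * ∑ i : Fin r, A i := by
    rw [integral_const_mul, integral_finset_sum _ fun i _ => hminint i]
  have hintU : (∫ z, ∑ θ : (Fin r → Bool) × Λ,
      2 ^ s * (dist (T z) (ψ θ) ^ s * f θ z) ∂ν) = ∑ θ : (Fin r → Bool) × Λ, 2 ^ s * R θ := by
    rw [integral_finset_sum _ fun θ _ => (hTint θ).const_mul _]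
    exact Finset.sum_congr rfl fun θ _ => integral_const_mul _ _
  rw [hintL, hintU] at hint
  -- bound the sum by card times the sup
  set sup : ℝ := ⨆ θ : (Fin r → Bool) × Λ, 2 ^ s * R θ with hsup
  have hsumsup : ∑ θ : (Fin r → Bool) × Λ, 2 ^ s * R θ ≤
      (Fintype.card ((Fin r → Bool) × Λ) : ℝ) * sup := by
    have h := Finset.sum_le_card_nsmul Finset.univ
      (fun θ : (Fin r → Bool) × Λ => 2 ^ s * R θ) sup (fun θ _ => le_ciSup hbdd θ)
    simpa [nsmul_eq_mul, Finset.card_univ] using h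
  have hcard : (Fintype.card ((Fin r → Bool) × Λ) : ℝ) = 2 ^ r * Fintype.card Λ := by
    rw [Fintype.card_prod, Fintype.card_fun]
    push_cast
    simp
  -- express the infimum term
  have hminA : ∀ i : Fin r,
      (∫ z, min (c * S i false z) (c * S i true z) ∂ν) = c * A i := by
    intro i
    rw [hA]
    simp only
    rw [← integral_const_mul]
    refine integral_congr_ae (Filter.Eventually.of_forall fun z => ?_)
    exact (mul_min_of_nonneg _ _ hcpos.le).symm
  have hinf_le : ∀ i : Fin r,
      (⨅ i : Fin r, ∫ z, min (c * S i false z) (c * S i true z) ∂ν) ≤ c * A i := by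
    intro i
    rw [← hminA i]
    exact ciInf_le (Set.Finite.bddBelow (Set.finite_range _)) i
  have hc2 : c * (2 ^ r * (Fintype.card Λ : ℝ)) = 2 := by
    rw [hc]
    have h2 : (2:ℝ) ^ r = 2 ^ (r - 1) * 2 := by
      rw [← pow_succ]
      congr 1
      omega
    field_simp [h2]
    linear_combination h2
  set m : ℝ := ⨅ i : Fin r, ∫ z, min (c * S i false z) (c * S i true z) ∂ν with hm
  have hrm : (r : ℝ) * m ≤ c * ∑ i : Fin r, A i := by
    calc (r : ℝ) * m = ∑ _i : Fin r, m := by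
          rw [Finset.sum_const, nsmul_eq_mul]
          simp
      _ ≤ ∑ i : Fin r, c * A i := Finset.sum_le_sum fun i _ => hinf_le i
      _ = c * ∑ i : Fin r, A i := by rw [Finset.mul_sum]
  have hmain : α * ((r : ℝ) * m) ≤ 2 * sup := by
    calc α * ((r : ℝ) * m) ≤ α * (c * ∑ i : Fin r, A i) :=
          mul_le_mul_of_nonneg_left hrm hα0
      _ = c * (α * ∑ i : Fin r, A i) := by ring
      _ ≤ c * ((Fintype.card ((Fin r → Bool) × Λ) : ℝ) * sup) :=
          mul_le_mul_of_nonneg_left (hint.trans hsumsup) hcpos.le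
      _ = c * (2 ^ r * (Fintype.card Λ : ℝ)) * sup := by rw [hcard]; ring
      _ = 2 * sup := by rw [hc2]
  calc α * ((r : ℝ) / 2) * m = (α * ((r : ℝ) * m)) / 2 := by ring
    _ ≤ (2 * sup) / 2 := by linarith
    _ = sup := by ring
end
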